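/- Let DB be an uncertain database all of whose existential probabilities lie in [0,1]. Then for every nonempty pattern α and every pattern β, expSup(α ++ β) ≤ expSup^cap(α); that is, expSup^cap of a pattern bounds from above the expected support of the pattern itself and of all its extensions. -/

import Mathlib

variable {I : Type*}

/-- An uncertain sequence: a finite list of (item, existential probability) pairs. -/
abbrev USeq (I : Type*) := List (I × ℝ)

/-- An uncertain database: a finite list of uncertain sequences. -/
abbrev UDB (I : Type*) := List (USeq I)

/-- `α` occurs in `S`: some sublist of `S` has item list `α`. -/
def Occurs (α : List I) (S : USeq I) : Prop :=
  ∃ o : USeq I, o.Sublist S ∧ o.map Prod.fst = α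

/-- Maximum occurrence probability of pattern `α` in `S`
(`0` if `α` has no occurrence in `S`; `1` for the empty pattern). -/
noncomputable def maxPrS [DecidableEq I] (α : List I) (S : USeq I) : ℝ :=
  WithBot.unbotD 0 ((S.sublists.filter fun o => decide (o.map Prod.fst = α)).map
      fun o => (o.map Prod.snd).prod).maximum

/-- Greedy projection: `projSeq α S = some S'` iff `α` occurs in `S`, in which case `S'`
is the suffix of `S` strictly after the last matched position of the greedy (leftmost)
occurrence of `α` in `S`.  For the empty pattern it is `S` itself. -/
def projSeq [DecidableEq I] : List I → USeq I → Option (USeq I)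
  | [], S => some S
  | _ :: _, [] => none
  | i :: α, (x, _) :: rest =>
      if x = i then projSeq α rest else projSeq (i :: α) rest

/-- The projected database `DB|α`. -/
def projDB [DecidableEq I] (α : List I) (DB : UDB I) : UDB I :=
  DB.filterMap (projSeq α)

/-- `P̂_D(i)`: maximum probability of an entry with item `i` over all sequences of `D`
(`0` if `i` occurs in no sequence of `D`). -/
noncomputable def Phat [DecidableEq I] (D : UDB I) (i : I) : ℝ :=
  WithBot.unbotD 0 ((D.flatten.filter fun e => decide (e.1 = i)).map Prod.snd).maximum

/-- `maxPr(α)` relative to `DB`: the product of per-step maximum probabilities over the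
successively projected databases. -/
noncomputable def maxPrDB [DecidableEq I] (DB : UDB I) (α : List I) : ℝ :=
  ∏ k : Fin α.length, Phat (projDB (α.take k.val) DB) (α.get k)

/-- Expected support of `α` in `DB`. -/
noncomputable def expSup [DecidableEq I] (DB : UDB I) (α : List I) : ℝ :=
  (DB.map fun S => maxPrS α S).sum

/-- `expSup^cap` of a nonempty pattern (junk value `0` on the empty pattern). -/
noncomputable def expSupCap [DecidableEq I] (DB : UDB I) (α : List I) : ℝ :=
  match α.getLast? with
  | none => 0
  | some i =>
      maxPrDB DB α.dropLast *
        ((projDB α.dropLast DB).map fun S' => maxPrS [i] S').sum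

/-- Number of sequences of `D` in which item `i` occurs. -/
def supCount [DecidableEq I] (D : UDB I) (i : I) : ℕ :=
  (D.filter fun S => decide (i ∈ S.map Prod.fst)).length

/-- `expSupport^top` of a nonempty pattern (junk value `0` on the empty pattern). -/
noncomputable def expSupTop [DecidableEq I] (DB : UDB I) (α : List I) : ℝ :=
  match α.getLast? with
  | none => 0
  | some i =>
      maxPrDB DB α.dropLast * Phat (projDB α.dropLast DB) i *
        (supCount (projDB α.dropLast DB) i : ℝ)

/-- Item `i` occurs in some sequence of `D`. -/
def ItemOccursIn (D : UDB I) (i : I) : Prop :=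
  ∃ S ∈ D, i ∈ S.map Prod.fst

/-- `sWeight`: average weight of the items of a pattern. -/
noncomputable def sWeight (w : I → ℝ) (α : List I) : ℝ :=
  (α.map w).sum / (α.length : ℝ)

/-- Maximum weight among the items of a pattern (`0` for the empty pattern). -/
noncomputable def mxWs (w : I → ℝ) (α : List I) : ℝ :=
  WithBot.unbotD 0 (α.map w).maximum

/-- Maximum weight among items occurring in some sequence of `D` (`0` if none). -/
noncomputable def mxWDB (w : I → ℝ) (D : UDB I) : ℝ :=
  WithBot.unbotD 0 (D.flatten.map fun e => w e.1).maximum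

/-- `wgt^cap`. -/
noncomputable def wgtCap [DecidableEq I] (DB : UDB I) (w : I → ℝ) (α : List I) : ℝ :=
  max (mxWDB w (projDB α.dropLast DB)) (mxWs w α)

/-- Weighted expected support. -/
noncomputable def WES [DecidableEq I] (DB : UDB I) (w : I → ℝ) (α : List I) : ℝ :=
  expSup DB α * sWeight w α

/-- `wExpSup^cap`. -/
noncomputable def wExpSupCap [DecidableEq I] (DB : UDB I) (w : I → ℝ) (α : List I) : ℝ :=
  expSupCap DB α * wgtCap DB w α

section Aux
variable [DecidableEq I]

private lemma le_unbot'_maximum {L : List ℝ} {a : ℝ} (ha : a ∈ L) :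
    a ≤ WithBot.unbotD 0 L.maximum := by
  rcases h : L.maximum with _ | m
  · exact absurd (List.le_maximum_of_mem' ha) (by rw [h]; exact WithBot.not_coe_le_bot a)
  · have := List.le_maximum_of_mem' ha
    rw [h] at this
    have h2 : a ≤ m := WithBot.coe_le_coe.mp this
    exact h2

private lemma unbot'_maximum_le {L : List ℝ} {c : ℝ} (h0 : 0 ≤ c) (h : ∀ a ∈ L, a ≤ c) :
    WithBot.unbotD 0 L.maximum ≤ c := by
  rcases hm : L.maximum with _ | m
  · exact h0
  · exact h m (List.maximum_mem hm)

private lemma le_maxPrS {S o : USeq I} {α : List I} (hs : o.Sublist S)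
    (hi : o.map Prod.fst = α) : (o.map Prod.snd).prod ≤ maxPrS α S := by
  apply le_unbot'_maximum
  simp only [List.mem_map, List.mem_filter, List.mem_sublists]
  exact ⟨o, ⟨hs, by simpa using hi⟩, rfl⟩

private lemma maxPrS_le {S : USeq I} {α : List I} {c : ℝ} (h0 : 0 ≤ c)
    (h : ∀ o : USeq I, o.Sublist S → o.map Prod.fst = α → (o.map Prod.snd).prod ≤ c) :
    maxPrS α S ≤ c := by
  apply unbot'_maximum_le h0
  intro a ha
  simp only [List.mem_map, List.mem_filter, List.mem_sublists, decide_eq_true_eq] at ha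
  obtain ⟨o, ⟨hs, hi⟩, rfl⟩ := ha
  exact h o hs hi

private lemma prod_mem_Icc {l : List ℝ} (h : ∀ a ∈ l, a ∈ Set.Icc (0:ℝ) 1) :
    l.prod ∈ Set.Icc (0:ℝ) 1 := by
  induction l with
  | nil => simp
  | cons a l ih =>
    have ha := h a (by simp)
    have hl := ih fun b hb => h b (by simp [hb])
    simp only [List.prod_cons]
    exact ⟨mul_nonneg ha.1 hl.1, mul_le_one₀ ha.2 hl.1 hl.2⟩

private lemma maxPrS_nonneg {S : USeq I} {α : List I} (hp : ∀ e ∈ S, 0 ≤ e.2) :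
    0 ≤ maxPrS α S := by
  unfold maxPrS
  rcases hm : (((S.sublists.filter fun o => decide (o.map Prod.fst = α)).map
      fun o => (o.map Prod.snd).prod).maximum) with _ | m
  · rw [hm]; exact le_refl _
  · have hmem := List.maximum_mem hm
    simp only [List.mem_map, List.mem_filter, List.mem_sublists] at hmem
    obtain ⟨o, ⟨hs, _⟩, rfl⟩ := hmem
    have : 0 ≤ (o.map Prod.snd).prod := by
      apply List.prod_nonneg
      intro a ha
      simp only [List.mem_map] at ha
      obtain ⟨e, he, rfl⟩ := ha
      exact hp e (hs.subset he)
    rw [hm]; exact this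

private lemma le_Phat {D : UDB I} {e : I × ℝ} {i : I} (he : e ∈ D.flatten) (hi : e.1 = i) :
    e.2 ≤ Phat D i := by
  apply le_unbot'_maximum
  simp only [List.mem_map, List.mem_filter]
  exact ⟨e, ⟨he, by simp [hi]⟩, rfl⟩

private lemma Phat_nonneg {D : UDB I} {i : I} (hp : ∀ e ∈ D.flatten, (0:ℝ) ≤ e.2) :
    0 ≤ Phat D i := by
  unfold Phat
  rcases hm : ((D.flatten.filter fun e => decide (e.1 = i)).map Prod.snd).maximum with _ | m
  · rw [hm]; exact le_refl _
  · have hmem := List.maximum_mem hm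
    simp only [List.mem_map, List.mem_filter] at hmem
    obtain ⟨e, ⟨he, _⟩, rfl⟩ := hmem
    rw [hm]; exact hp e he

private lemma projSeq_sublist : ∀ {γ : List I} {S S' : USeq I},
    projSeq γ S = some S' → S'.Sublist S
  | [], S, S', h => by
    simp only [projSeq, Option.some.injEq] at h
    subst h; exact List.Sublist.refl _
  | i :: γ, [], S', h => by simp [projSeq] at h
  | i :: γ, (x, p) :: rest, S', h => by
    rw [projSeq] at h
    split at h
    · exact (projSeq_sublist h).trans (List.sublist_cons_self _ _)
    · exact (projSeq_sublist h).trans (List.sublist_cons_self _ _)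

private lemma projSeq_cons_bind (i : I) (γ : List I) : ∀ S : USeq I,
    projSeq (i :: γ) S = (projSeq [i] S).bind (projSeq γ)
  | [] => rfl
  | (x, p) :: rest => by
    rw [projSeq, projSeq]
    split
    · simp [projSeq]
    · exact projSeq_cons_bind i γ rest

private lemma projSeq_append (a b : List I) (S : USeq I) :
    projSeq (a ++ b) S = (projSeq a S).bind (projSeq b) := by
  induction a generalizing S with
  | nil => simp [projSeq]
  | cons i a ih =>
    rw [List.cons_append, projSeq_cons_bind, projSeq_cons_bind i a S, Option.bind_assoc]
    rcases projSeq [i] S with _ | S₁ <;> simp [ih]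

private lemma projDB_nil (DB : UDB I) : projDB [] DB = DB := by
  have : (projSeq [] : USeq I → Option (USeq I)) = some := funext fun S => by simp [projSeq]
  rw [projDB, this, List.filterMap_some]

private lemma projDB_append (a b : List I) (DB : UDB I) :
    projDB (a ++ b) DB = projDB b (projDB a DB) := by
  unfold projDB
  rw [List.filterMap_filterMap]
  congr 1
  funext S
  exact projSeq_append a b S

private lemma hp_projDB {DB : UDB I} {γ : List I} {P : I × ℝ → Prop}
    (hp : ∀ S ∈ DB, ∀ e ∈ S, P e) :
    ∀ S' ∈ projDB γ DB, ∀ e ∈ S', P e := by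
  intro S' hS' e he
  simp only [projDB, List.mem_filterMap] at hS'
  obtain ⟨S, hS, hproj⟩ := hS'
  exact hp S hS e ((projSeq_sublist hproj).subset he)

private lemma maxPrDB_nil (DB : UDB I) : maxPrDB DB [] = 1 := by
  simp [maxPrDB]

private lemma maxPrDB_cons (DB : UDB I) (i : I) (γ : List I) :
    maxPrDB DB (i :: γ) = Phat DB i * maxPrDB (projDB [i] DB) γ := by
  have h : maxPrDB DB (i :: γ)
      = ∏ k : Fin (γ.length + 1), Phat (projDB ((i :: γ).take k.val) DB) ((i :: γ).get k) :=
    rfl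
  rw [h, Fin.prod_univ_succ]
  congr 1
  · simp [projDB_nil]
  · unfold maxPrDB
    apply Finset.prod_congr rfl
    intro k _
    rw [show (i :: γ).take (Fin.succ k).val = [i] ++ γ.take k.val from rfl, projDB_append]
    rfl

private lemma maxPrDB_nonneg {DB : UDB I} (hp : ∀ S ∈ DB, ∀ e ∈ S, (0:ℝ) ≤ e.2)
    (γ : List I) : 0 ≤ maxPrDB DB γ := by
  apply Finset.prod_nonneg
  intro k _
  apply Phat_nonneg
  intro e he
  rw [List.mem_flatten] at he
  obtain ⟨S', hS', heS'⟩ := he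
  exact hp_projDB hp S' hS' e heS'

private lemma sublist_projSeq_single {S : USeq I} {e : I × ℝ} {o : USeq I} {i : I} :
    (e :: o).Sublist S → e.1 = i → ∃ S', projSeq [i] S = some S' ∧ o.Sublist S' := by
  induction S with
  | nil => intro h; exact absurd h (by simp)
  | cons x rest ih =>
    intro h hi
    obtain ⟨x1, x2⟩ := x
    rcases h with _ | @⟨_, _, _, h⟩ | @⟨_, _, _, h⟩
    case cons =>
      obtain ⟨S', hS', hsub⟩ := ih h hi
      by_cases hx : x1 = i
      · exact ⟨rest, by simp [projSeq, hx],
          ((List.sublist_cons_self e o).trans h).trans (List.Sublist.refl _) |>.trans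
            (List.Sublist.refl _) |>.trans (List.Sublist.refl _) |>.trans
            (List.Sublist.refl _)⟩
      · exact ⟨S', by simp [projSeq, hx, hS'], hsub⟩
    case cons.cons_cons =>
      have hx : x1 = i := hi
      exact ⟨rest, by simp [projSeq, hx], h⟩

private lemma key_lemma (γ : List I) :
    ∀ (DB : UDB I), (∀ S ∈ DB, ∀ e ∈ S, e.2 ∈ Set.Icc (0:ℝ) 1) →
    ∀ (δ : List I) (S : USeq I), S ∈ DB → ∀ o : USeq I, o.Sublist S →
    o.map Prod.fst = γ ++ δ →
    ∃ S', projSeq γ S = some S' ∧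
      (o.map Prod.snd).prod ≤ maxPrDB DB γ * maxPrS δ S' := by
  induction γ with
  | nil =>
    intro DB hp δ S hS o ho hi
    exact ⟨S, by simp [projSeq], by
      rw [maxPrDB_nil, one_mul]
      exact le_maxPrS ho (by simpa using hi)⟩
  | cons i γ ih =>
    intro DB hp δ S hS o ho hi
    match o, hi with
    | e :: o₂, hi =>
      simp only [List.map_cons, List.cons_append, List.cons.injEq] at hi
      obtain ⟨he1, hi₂⟩ := hi
      obtain ⟨S₁, hS₁, ho₂⟩ := sublist_projSeq_single ho he1
      have hS₁mem : S₁ ∈ projDB [i] DB := by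
        simp only [projDB, List.mem_filterMap]
        exact ⟨S, hS, hS₁⟩
      have hp' : ∀ T ∈ projDB [i] DB, ∀ e ∈ T, e.2 ∈ Set.Icc (0:ℝ) 1 := hp_projDB hp
      obtain ⟨S₂, hS₂, hle⟩ := ih (projDB [i] DB) hp' δ S₁ hS₁mem o₂ ho₂ hi₂
      refine ⟨S₂, ?_, ?_⟩
      · rw [projSeq_cons_bind, hS₁, Option.bind_some, hS₂]
      · have heS : e ∈ S := ho.subset (by simp)
        have heP : e.2 ≤ Phat DB i :=
          le_Phat (List.mem_flatten.mpr ⟨S, hS, heS⟩) he1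
        have he0 : 0 ≤ e.2 := (hp S hS e heS).1
        have hprod0 : 0 ≤ (o₂.map Prod.snd).prod := by
          apply List.prod_nonneg
          intro a ha
          simp only [List.mem_map] at ha
          obtain ⟨f, hf, rfl⟩ := ha
          exact (hp S hS f (ho.subset (by simp [hf]))).1
        have hPhat0 : 0 ≤ Phat DB i := le_trans he0 heP
        rw [List.map_cons, List.prod_cons, maxPrDB_cons, mul_assoc]
        exact mul_le_mul heP hle hprod0 hPhat0

private lemma maxPrS_append_le {S : USeq I} (hp : ∀ e ∈ S, e.2 ∈ Set.Icc (0:ℝ) 1)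
    (δ₁ δ₂ : List I) : maxPrS (δ₁ ++ δ₂) S ≤ maxPrS δ₁ S := by
  apply maxPrS_le (maxPrS_nonneg fun e he => (hp e he).1)
  intro o hs hi
  have htake : (o.take δ₁.length).map Prod.fst = δ₁ := by
    rw [List.map_take, hi, List.take_left]
  have h1 : ((o.take δ₁.length).map Prod.snd).prod ≤ maxPrS δ₁ S :=
    le_maxPrS ((List.take_sublist _ _).trans hs) htake
  have hsplit : (o.map Prod.snd).prod
      = ((o.take δ₁.length).map Prod.snd).prod * ((o.drop δ₁.length).map Prod.snd).prod := by
    rw [← List.prod_append, ← List.map_append, List.take_append_drop]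
  have hdrop : ((o.drop δ₁.length).map Prod.snd).prod ∈ Set.Icc (0:ℝ) 1 := by
    apply prod_mem_Icc
    intro a ha
    simp only [List.mem_map] at ha
    obtain ⟨f, hf, rfl⟩ := ha
    exact hp f (hs.subset ((List.drop_sublist _ _).subset hf))
  have htake0 : 0 ≤ ((o.take δ₁.length).map Prod.snd).prod := by
    apply List.prod_nonneg
    intro a ha
    simp only [List.mem_map] at ha
    obtain ⟨f, hf, rfl⟩ := ha
    exact (hp f (hs.subset ((List.take_sublist _ _).subset hf))).1
  calc (o.map Prod.snd).prod
      = ((o.take δ₁.length).map Prod.snd).prod * ((o.drop δ₁.length).map Prod.snd).prod :=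
        hsplit
    _ ≤ ((o.take δ₁.length).map Prod.snd).prod := mul_le_of_le_one_right htake0 hdrop.2
    _ ≤ maxPrS δ₁ S := h1

private lemma sum_map_proj (DB : UDB I) (γ : List I) (h : USeq I → ℝ) :
    (DB.map fun S => (projSeq γ S).elim 0 h).sum = ((projDB γ DB).map h).sum := by
  induction DB with
  | nil => simp [projDB]
  | cons S DB ih =>
    rcases hS : projSeq γ S with _ | S' <;>
      simp [projDB, List.filterMap_cons, hS, ← ih, projDB] <;>
      simp [projDB] at ih <;> simp [ih]

end Aux

/-- If all probabilities of `DB` lie in `[0,1]`, then for every nonempty pattern `α` and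
every pattern `β`, `expSup(α ++ β) ≤ expSup^cap(α)`. -/
theorem expSup_append_le_expSupCap [DecidableEq I]
    (DB : UDB I) (hp : ∀ S ∈ DB, ∀ e ∈ S, e.2 ∈ Set.Icc (0 : ℝ) 1)
    (α : List I) (hα : α ≠ []) (β : List I) :
    expSup DB (α ++ β) ≤ expSupCap DB α := by
  obtain ⟨γ, i, rfl⟩ : ∃ γ i, α = γ ++ [i] :=
    ⟨α.dropLast, α.getLast hα, (List.dropLast_append_getLast hα).symm⟩
  have hp0 : ∀ S ∈ DB, ∀ e ∈ S, (0:ℝ) ≤ e.2 := fun S hS e he => (hp S hS e he).1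
  have hCap : expSupCap DB (γ ++ [i])
      = maxPrDB DB γ * ((projDB γ DB).map fun S' => maxPrS [i] S').sum := by
    rw [expSupCap, List.getLast?_concat, List.dropLast_concat]
  rw [hCap]
  have hC0 : 0 ≤ maxPrDB DB γ := maxPrDB_nonneg hp0 γ
  have hbound : ∀ S ∈ DB, maxPrS ((γ ++ [i]) ++ β) S
      ≤ (projSeq γ S).elim 0 (fun S' => maxPrDB DB γ * maxPrS [i] S') := by
    intro S hS
    have hpS : ∀ e ∈ S, e.2 ∈ Set.Icc (0:ℝ) 1 := hp S hS
    rcases hS' : projSeq γ S with _ | S'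
    · apply maxPrS_le le_rfl
      intro o hs hi
      obtain ⟨T, hT, _⟩ := key_lemma γ DB hp ([i] ++ β) S hS o hs
        (by rw [hi, List.append_assoc])
      rw [hS'] at hT; cases hT
    · have hpS' : ∀ e ∈ S', e.2 ∈ Set.Icc (0:ℝ) 1 := fun e he =>
        hpS e ((projSeq_sublist hS').subset he)
      have h0S' : 0 ≤ maxPrS [i] S' := maxPrS_nonneg fun e he => (hpS' e he).1
      apply maxPrS_le (by simpa using mul_nonneg hC0 h0S')
      intro o hs hi
      obtain ⟨T, hT, hle⟩ := key_lemma γ DB hp ([i] ++ β) S hS o hs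
        (by rw [hi, List.append_assoc])
      rw [hS'] at hT
      injection hT with hT
      subst hT
      simp only [Option.elim_some]
      calc (o.map Prod.snd).prod ≤ maxPrDB DB γ * maxPrS ([i] ++ β) S' := hle
        _ ≤ maxPrDB DB γ * maxPrS [i] S' :=
          mul_le_mul_of_nonneg_left (maxPrS_append_le hpS' [i] β) hC0
  calc expSup DB ((γ ++ [i]) ++ β)
      ≤ (DB.map fun S => (projSeq γ S).elim 0
          (fun S' => maxPrDB DB γ * maxPrS [i] S')).sum := List.sum_le_sum hbound
    _ = ((projDB γ DB).map fun S' => maxPrDB DB γ * maxPrS [i] S').sum :=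
        sum_map_proj DB γ _
    _ = maxPrDB DB γ * ((projDB γ DB).map fun S' => maxPrS [i] S').sum :=
        List.sum_map_mul_left _ _ _
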